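/- arXiv:0906.1267 — 7 statements merged into one kernel-verified Lean document; each statement's English description precedes it below -/
import Mathlib

section
/- Let n ≥ 1, let x₀ ∈ ℝⁿ, let c > 0, and let f : ℝⁿ → ℝ be a 1-Lipschitz function with f(x₀) = 0. Then the function g : ℝⁿ → ℝ defined by g(x) = f(x)·exp(−‖x − x₀‖/c) is 1-Lipschitz. -/
lemma key_lipschitz_aux (c a b d fx fy : ℝ) (hc : 0 < c) (hb : 0 ≤ b) (hab : b ≤ a)
    (hfy : |fy| ≤ b) (hlip : |fx - fy| ≤ d) (hd1 : a - b ≤ d) :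
    |fx * Real.exp (-(a / c)) - fy * Real.exp (-(b / c))| ≤ d := by
  set u := Real.exp (-(a / c)) with hu
  set v := Real.exp (-(b / c)) with hv
  have hu0 : 0 < u := Real.exp_pos _
  have hv0 : 0 < v := Real.exp_pos _
  have huv : u ≤ v := Real.exp_le_exp.2 (by
    have : b / c ≤ a / c := by gcongr
    linarith)
  have hd0 : 0 ≤ d := le_trans (abs_nonneg _) hlip
  have hsplit : u = v * Real.exp (-((a - b) / c)) := by
    rw [hu, hv, ← Real.exp_add]; ring_nf
  have hs : 0 ≤ (a - b) / c := div_nonneg (by linarith) hc.le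
  have hexp : 1 - Real.exp (-((a - b) / c)) ≤ (a - b) / c := by
    have := Real.add_one_le_exp (-((a - b) / c))
    linarith
  have hvu : v - u ≤ v * ((a - b) / c) := by
    rw [hsplit]; nlinarith
  have hv1 : v * (1 + b / c) ≤ 1 := by
    have h1 : b / c + 1 ≤ Real.exp (b / c) := Real.add_one_le_exp _
    have h2 : v * Real.exp (b / c) = 1 := by
      rw [hv, ← Real.exp_add]; ring_nf; exact Real.exp_zero
    nlinarith
  have hrw : fx * u - fy * v = (fx - fy) * u + fy * (u - v) := by ring
  have hfy0 : 0 ≤ |fy| := abs_nonneg _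
  calc |fx * u - fy * v| ≤ |(fx - fy) * u| + |fy * (u - v)| := by
        rw [hrw]; exact abs_add_le _ _
    _ = |fx - fy| * u + |fy| * (v - u) := by
        rw [abs_mul, abs_mul, abs_of_pos hu0,
          show |u - v| = v - u by rw [abs_sub_comm]; exact abs_of_nonneg (by linarith)]
    _ ≤ d * u + b * (v * ((a - b) / c)) := by
        have h3 : |fy| * (v - u) ≤ b * (v * ((a - b) / c)) := by nlinarith
        have h4 : |fx - fy| * u ≤ d * u := by nlinarith
        linarith
    _ ≤ d := by
        have hvb : 0 ≤ v * (b / c) := by positivity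
        have h5 : b * (v * ((a - b) / c)) ≤ d * (v * (b / c)) := by
          have : b * (v * ((a - b) / c)) = (a - b) * (v * (b / c)) := by ring
          rw [this]; nlinarith
        have h6 : d * u ≤ d * v := by nlinarith
        nlinarith

/-- If `f : ℝⁿ → ℝ` is `1`-Lipschitz with `f x₀ = 0` and `c > 0`, then
`g x = f x · exp (−‖x − x₀‖ / c)` is `1`-Lipschitz. -/
theorem lipschitz_mul_exp_neg_dist
    (n : ℕ) (hn : 1 ≤ n) (x₀ : EuclideanSpace ℝ (Fin n)) (c : ℝ) (hc : 0 < c)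
    (f : EuclideanSpace ℝ (Fin n) → ℝ)
    (hf_lip : ∀ x y, |f x - f y| ≤ ‖x - y‖)
    (hf_x₀ : f x₀ = 0) :
    ∀ x y, |f x * Real.exp (-(‖x - x₀‖ / c)) - f y * Real.exp (-(‖y - x₀‖ / c))| ≤ ‖x - y‖ := by
  intro x y
  have hbound : ∀ z, |f z| ≤ ‖z - x₀‖ := fun z => by
    have := hf_lip z x₀; rwa [hf_x₀, sub_zero] at this
  have hnorm : |‖x - x₀‖ - ‖y - x₀‖| ≤ ‖x - y‖ := by
    have := abs_norm_sub_norm_le (x - x₀) (y - x₀)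
    simpa using this
  rcases le_total (‖y - x₀‖) (‖x - x₀‖) with h | h
  · exact key_lipschitz_aux c _ _ _ _ _ hc (norm_nonneg _) h (hbound y) (hf_lip x y)
      (by have := abs_le.1 hnorm; linarith [this.2])
  · rw [abs_sub_comm, ← norm_neg (x - y)]
    have hxy : -(x - y) = y - x := by abel
    rw [hxy]
    have hrev : ‖y - x‖ = ‖x - y‖ := norm_sub_rev y x
    exact key_lipschitz_aux c _ _ _ _ _ hc (norm_nonneg _) h (hbound x)
      (hf_lip y x) (by have := abs_le.1 hnorm; rw [hrev]; linarith [this.1])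
end

section
/- Let n ≥ 1 and let μ₁, μ₂ be Borel probability measures on ℝⁿ. Then the supremum, taken in the extended nonnegative reals, of ∫ f dμ₁ − ∫ f dμ₂ over all continuous 1-Lipschitz functions f : ℝⁿ → ℝ vanishing at infinity equals the supremum of ∫ f dμ₁ − ∫ f dμ₂ over all 1-Lipschitz functions f : ℝⁿ → ℝ that are integrable with respect to both μ₁ and μ₂. -/
open Filter Topology MeasureTheory

/-- For Borel probability measures `μ₁, μ₂` on `ℝⁿ`, the supremum (in `[0,∞]`)
of `∫ f dμ₁ − ∫ f dμ₂` over continuous `1`-Lipschitz functions vanishing at infinity equals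
the supremum over `1`-Lipschitz functions integrable with respect to both measures
(the Kantorovich dual expression for the Wasserstein distance of order 1). -/
theorem sup_continuous_vanishing_eq_sup_integrable
    (n : ℕ) (hn : 1 ≤ n)
    (μ₁ μ₂ : Measure (EuclideanSpace ℝ (Fin n)))
    [IsProbabilityMeasure μ₁] [IsProbabilityMeasure μ₂] :
    (⨆ f : {f : EuclideanSpace ℝ (Fin n) → ℝ //
        Continuous f ∧ (∀ x y, |f x - f y| ≤ ‖x - y‖) ∧
        Tendsto f (cocompact (EuclideanSpace ℝ (Fin n))) (nhds 0)},
      ENNReal.ofReal ((∫ x, f.1 x ∂μ₁) - ∫ x, f.1 x ∂μ₂)) =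
    (⨆ f : {f : EuclideanSpace ℝ (Fin n) → ℝ //
        (∀ x y, |f x - f y| ≤ ‖x - y‖) ∧ Integrable f μ₁ ∧ Integrable f μ₂},
      ENNReal.ofReal ((∫ x, f.1 x ∂μ₁) - ∫ x, f.1 x ∂μ₂)) := by
  set E := EuclideanSpace ℝ (Fin n)
  apply le_antisymm
  · -- continuous vanishing ⇒ integrable
    apply iSup_le
    rintro ⟨f, hc, hl, h0⟩
    have hbcf : Integrable f μ₁ ∧ Integrable f μ₂ := by
      set F : ZeroAtInftyContinuousMap E ℝ := ⟨⟨f, hc⟩, h0⟩ with hF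
      have hco : ⇑F.toBCF = f := rfl
      exact ⟨hco ▸ F.toBCF.integrable μ₁, hco ▸ F.toBCF.integrable μ₂⟩
    exact le_iSup (fun g : {f : E → ℝ //
        (∀ x y, |f x - f y| ≤ ‖x - y‖) ∧ Integrable f μ₁ ∧ Integrable f μ₂} =>
      ENNReal.ofReal ((∫ x, g.1 x ∂μ₁) - ∫ x, g.1 x ∂μ₂))
      ⟨f, hl, hbcf.1, hbcf.2⟩
  · apply iSup_le
    rintro ⟨f, hl, h1, h2⟩
    have hL : LipschitzWith 1 f := by
      apply LipschitzWith.of_dist_le_mul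
      intro x y
      simpa [Real.dist_eq, dist_eq_norm] using hl x y
    -- truncation
    set g : ℕ → E → ℝ := fun k x =>
      max (min (f x) (max ((k : ℝ) - ‖x‖) 0)) (-(max ((k : ℝ) - ‖x‖) 0)) with hg
    have hcL : ∀ k : ℕ, LipschitzWith 1 (fun x : E => max ((k : ℝ) - ‖x‖) 0) := by
      intro k
      apply LipschitzWith.of_dist_le_mul
      intro x y
      rw [Real.dist_eq, NNReal.coe_one, one_mul, dist_eq_norm]
      calc |max ((k : ℝ) - ‖x‖) 0 - max ((k : ℝ) - ‖y‖) 0|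
          ≤ |((k : ℝ) - ‖x‖) - ((k : ℝ) - ‖y‖)| := abs_max_sub_max_le_abs _ _ _
        _ = |‖y‖ - ‖x‖| := by ring_nf
        _ ≤ ‖y - x‖ := abs_norm_sub_norm_le _ _
        _ = ‖x - y‖ := norm_sub_rev _ _
    have hgL : ∀ k, LipschitzWith 1 (g k) := by
      intro k
      have := (hL.min (hcL k)).max (hcL k).neg
      simpa using this
    have hgl : ∀ k, ∀ x y : E, |g k x - g k y| ≤ ‖x - y‖ := by
      intro k x y
      calc |g k x - g k y| ≤ dist x y := by
            simpa [Real.dist_eq] using (hgL k).dist_le_mul x y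
        _ = ‖x - y‖ := dist_eq_norm x y
    have hbound : ∀ k x, |g k x| ≤ |f x| := by
      intro k x
      have hc0 : (0 : ℝ) ≤ max ((k : ℝ) - ‖x‖) 0 := le_max_right _ _
      rw [abs_le]
      constructor
      · refine le_trans ?_ (le_max_left _ _)
        exact le_min (neg_abs_le _) (le_trans (neg_nonpos.2 (abs_nonneg _)) hc0)
      · refine max_le (le_trans (min_le_left _ _) (le_abs_self _)) ?_
        exact le_trans (neg_nonpos.2 hc0) (abs_nonneg _)
    have hzero : ∀ k : ℕ, ∀ x : E, (k : ℝ) ≤ ‖x‖ → g k x = 0 := by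
      intro k x hx
      have hc : max ((k : ℝ) - ‖x‖) 0 = 0 := max_eq_right (by linarith)
      show max (min (f x) (max ((k : ℝ) - ‖x‖) 0)) (-(max ((k : ℝ) - ‖x‖) 0)) = 0
      rw [hc, neg_zero]
      exact max_eq_right (min_le_right _ _)
    have hten : ∀ k : ℕ, Tendsto (g k) (cocompact E) (𝓝 0) := by
      intro k
      have hEq : g k =ᶠ[cocompact E] fun _ => (0 : ℝ) := by
        rw [Filter.EventuallyEq, Filter.hasBasis_cocompact.eventually_iff]
        refine ⟨Metric.closedBall (0 : E) k, isCompact_closedBall _ _, ?_⟩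
        intro x hx
        apply hzero
        simp only [Set.mem_compl_iff, Metric.mem_closedBall, not_le, dist_zero_right] at hx
        exact hx.le
      exact Tendsto.congr' hEq.symm tendsto_const_nhds
    have hpt : ∀ x : E, Tendsto (fun k => g k x) atTop (𝓝 (f x)) := by
      intro x
      obtain ⟨N, hN⟩ := exists_nat_ge (‖x‖ + |f x|)
      have hE : (fun _ : ℕ => f x) =ᶠ[atTop] fun k => g k x := by
        rw [Filter.EventuallyEq, eventually_atTop]
        refine ⟨N, fun k hk => ?_⟩
        have hck : |f x| ≤ max ((k : ℝ) - ‖x‖) 0 := by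
          refine le_trans ?_ (le_max_left _ _)
          have : (N : ℝ) ≤ (k : ℝ) := Nat.cast_le.2 hk
          linarith
        have h1' : min (f x) (max ((k : ℝ) - ‖x‖) 0) = f x :=
          min_eq_left (le_trans (le_abs_self _) hck)
        show f x = max (min (f x) (max ((k : ℝ) - ‖x‖) 0)) (-(max ((k : ℝ) - ‖x‖) 0))
        rw [h1']
        exact (max_eq_left (le_trans (neg_le_neg hck) (neg_abs_le _))).symm
      exact Tendsto.congr' hE tendsto_const_nhds
    have hconv : ∀ (μ : Measure E), IsProbabilityMeasure μ → Integrable f μ →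
        Tendsto (fun k => ∫ x, g k x ∂μ) atTop (𝓝 (∫ x, f x ∂μ)) := by
      intro μ _ hint
      refine tendsto_integral_of_dominated_convergence (fun x => |f x|)
        (fun k => (hgL k).continuous.aestronglyMeasurable) hint.abs
        (fun k => Filter.Eventually.of_forall fun x => by
          simpa [Real.norm_eq_abs] using hbound k x)
        (Filter.Eventually.of_forall hpt)
    have hmem : ∀ k : ℕ,
        ENNReal.ofReal ((∫ x, g k x ∂μ₁) - ∫ x, g k x ∂μ₂) ≤
        (⨆ f : {f : E → ℝ //
            Continuous f ∧ (∀ x y, |f x - f y| ≤ ‖x - y‖) ∧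
            Tendsto f (cocompact E) (nhds 0)},
          ENNReal.ofReal ((∫ x, f.1 x ∂μ₁) - ∫ x, f.1 x ∂μ₂)) := by
      intro k
      exact le_iSup (fun h : {f : E → ℝ //
          Continuous f ∧ (∀ x y, |f x - f y| ≤ ‖x - y‖) ∧
          Tendsto f (cocompact E) (nhds 0)} =>
        ENNReal.ofReal ((∫ x, h.1 x ∂μ₁) - ∫ x, h.1 x ∂μ₂))
        ⟨g k, (hgL k).continuous, hgl k, hten k⟩
    have htend : Tendsto (fun k => ENNReal.ofReal ((∫ x, g k x ∂μ₁) - ∫ x, g k x ∂μ₂))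
        atTop (𝓝 (ENNReal.ofReal ((∫ x, f x ∂μ₁) - ∫ x, f x ∂μ₂))) :=
      (ENNReal.continuous_ofReal.tendsto _).comp
        ((hconv μ₁ inferInstance h1).sub (hconv μ₂ inferInstance h2))
    exact le_of_tendsto' htend hmem
end

section
/- There is no continuous function θ : [0,1] → ℝ such that sin((θ(1) − θ(0))/2) ≠ 0 and |sin((θ(t) − θ(s))/2)| = |t − s| · |sin((θ(1) − θ(0))/2)| for all s, t ∈ [0,1]. -/
/-- there is no continuous `θ : [0,1] → ℝ` with
`sin((θ(1) − θ(0))/2) ≠ 0` such that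
`|sin((θ(t) − θ(s))/2)| = |t − s| · |sin((θ(1) − θ(0))/2)|` for all `s, t ∈ [0,1]`. -/
theorem no_geodesic_curve_on_circle_of_states :
    ¬ ∃ θ : ℝ → ℝ, ContinuousOn θ (Set.Icc 0 1) ∧
      Real.sin ((θ 1 - θ 0) / 2) ≠ 0 ∧
      ∀ s ∈ Set.Icc (0 : ℝ) 1, ∀ t ∈ Set.Icc (0 : ℝ) 1,
        |Real.sin ((θ t - θ s) / 2)| = |t - s| * |Real.sin ((θ 1 - θ 0) / 2)| := by
  rintro ⟨θ, -, hne, h⟩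
  set c := |Real.sin ((θ 1 - θ 0) / 2)| with hc
  have hcpos : 0 < c := abs_pos.mpr hne
  set a := (θ (1/2) - θ 0) / 2 with ha
  set b := (θ 1 - θ (1/2)) / 2 with hb
  have h1 : |Real.sin a| = (1/2) * c := by
    have := h 0 (by norm_num) (1/2) (by norm_num)
    rw [ha]; rw [this]; norm_num
  have h2 : |Real.sin b| = (1/2) * c := by
    have := h (1/2) (by norm_num) 1 (by norm_num)
    rw [hb]; rw [this]; norm_num
  have hab : (θ 1 - θ 0) / 2 = a + b := by rw [ha, hb]; ring
  have hsum : |Real.sin a * Real.cos b + Real.cos a * Real.sin b| = c := by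
    rw [← Real.sin_add, ← hab]
  have ea : Real.sin a ^ 2 = (1/2 * c) ^ 2 := by rw [← sq_abs, h1]
  have eb : Real.sin b ^ 2 = (1/2 * c) ^ 2 := by rw [← sq_abs, h2]
  have es : (Real.sin a * Real.cos b + Real.cos a * Real.sin b) ^ 2 = c ^ 2 := by
    rw [← sq_abs, hsum]
  have pa := Real.sin_sq_add_cos_sq a
  have pb := Real.sin_sq_add_cos_sq b
  nlinarith [sq_nonneg (Real.sin a * Real.cos b - Real.cos a * Real.sin b),
    sq_nonneg c, mul_pos hcpos hcpos, sq_nonneg (c*c)]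
end

section
/- (Proposition 5.) Let m ≥ 1, let ψ : ℝᵐ → ℝ be a measurable nonnegative function with ∫ ψ(ξ) dξ = 1 and ∫ ‖ξ‖ ψ(ξ) dξ < ∞ (Lebesgue measure), let x, y ∈ ℝᵐ and σ, σ' > 0. Define the states Ψ_{σ,x}(f) = ∫ f(σξ + x) ψ(ξ) dξ and Ψ_{σ',y}(f) = ∫ f(σ'ξ + y) ψ(ξ) dξ. Then sup{ Ψ_{σ,x}(f) − Ψ_{σ',y}(f) : f : ℝᵐ → ℝ 1-Lipschitz } = ∫ ‖x − y + (σ − σ')ξ‖ ψ(ξ) dξ. -/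
open MeasureTheory
open scoped RealInnerProductSpace

/-- Proposition 5: the spectral (= order-1 Wasserstein) distance between
the wave packets `Ψ_{σ,x}` and `Ψ_{σ',y}` of common shape `ψ` equals
`∫ ‖x − y + (σ − σ')ξ‖ ψ(ξ) dξ`. -/
theorem distance_between_wave_packets
    (m : ℕ) (hm : 1 ≤ m)
    (ψ : EuclideanSpace ℝ (Fin m) → ℝ)
    (hψ_meas : Measurable ψ) (hψ_nonneg : ∀ ξ, 0 ≤ ψ ξ)
    (hψ_prob : ∫ ξ, ψ ξ = 1)
    (hψ_moment : Integrable (fun ξ => ‖ξ‖ * ψ ξ))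
    (x y : EuclideanSpace ℝ (Fin m)) (σ σ' : ℝ) (hσ : 0 < σ) (hσ' : 0 < σ') :
    (⨆ f : {f : EuclideanSpace ℝ (Fin m) → ℝ // ∀ x y, |f x - f y| ≤ ‖x - y‖},
      ENNReal.ofReal ((∫ ξ, f.1 (σ • ξ + x) * ψ ξ) - ∫ ξ, f.1 (σ' • ξ + y) * ψ ξ)) =
      ENNReal.ofReal (∫ ξ, ‖x - y + (σ - σ') • ξ‖ * ψ ξ) := by
  classical
  have hψ_int : Integrable ψ := by
    by_contra h
    rw [integral_undef h] at hψ_prob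
    norm_num at hψ_prob
  -- integrability of f(c•ξ+z)*ψ for 1-Lipschitz f
  have hInt : ∀ (f : EuclideanSpace ℝ (Fin m) → ℝ),
      (∀ a b, |f a - f b| ≤ ‖a - b‖) → ∀ (c : ℝ) (z : EuclideanSpace ℝ (Fin m)),
      Integrable (fun ξ => f (c • ξ + z) * ψ ξ) := by
    intro f hf c z
    have hlip : LipschitzWith 1 f := by
      refine LipschitzWith.of_dist_le_mul fun a b => ?_
      simpa [Real.dist_eq, dist_eq_norm] using hf a b
    have hmeas : Measurable fun ξ => f (c • ξ + z) * ψ ξ :=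
      (hlip.continuous.measurable.comp ((measurable_id.const_smul c).add_const z)).mul hψ_meas
    refine Integrable.mono' ((hψ_int.const_mul |f z|).add (hψ_moment.const_mul |c|))
      hmeas.aestronglyMeasurable (Filter.Eventually.of_forall fun ξ => ?_)
    have h1 : |f (c • ξ + z)| ≤ |f z| + |c| * ‖ξ‖ := by
      have h2 := hf (c • ξ + z) z
      have h3 : ‖(c • ξ + z) - z‖ = |c| * ‖ξ‖ := by
        simp [norm_smul]
      have h4 : |f (c • ξ + z)| - |f z| ≤ |f (c • ξ + z) - f z| :=
        abs_sub_abs_le_abs_sub _ _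
      have := h4.trans (h2.trans_eq h3)
      linarith
    have : ‖f (c • ξ + z) * ψ ξ‖ = |f (c • ξ + z)| * ψ ξ := by
      rw [Real.norm_eq_abs, abs_mul, abs_of_nonneg (hψ_nonneg ξ)]
    rw [this]
    have := mul_le_mul_of_nonneg_right h1 (hψ_nonneg ξ)
    calc |f (c • ξ + z)| * ψ ξ ≤ (|f z| + |c| * ‖ξ‖) * ψ ξ := this
      _ = |f z| * ψ ξ + |c| * (‖ξ‖ * ψ ξ) := by ring
  have hRHS_int : Integrable (fun ξ => ‖x - y + (σ - σ') • ξ‖ * ψ ξ) := by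
    have hmeas : Measurable fun ξ => ‖x - y + (σ - σ') • ξ‖ * ψ ξ :=
      ((measurable_const.add (measurable_id.const_smul (σ - σ'))).norm).mul hψ_meas
    refine Integrable.mono' ((hψ_int.const_mul ‖x - y‖).add (hψ_moment.const_mul |σ - σ'|))
      hmeas.aestronglyMeasurable (Filter.Eventually.of_forall fun ξ => ?_)
    have h1 : ‖x - y + (σ - σ') • ξ‖ ≤ ‖x - y‖ + |σ - σ'| * ‖ξ‖ := by
      calc ‖x - y + (σ - σ') • ξ‖ ≤ ‖x - y‖ + ‖(σ - σ') • ξ‖ := norm_add_le _ _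
        _ = ‖x - y‖ + |σ - σ'| * ‖ξ‖ := by rw [norm_smul, Real.norm_eq_abs]
    have : ‖‖x - y + (σ - σ') • ξ‖ * ψ ξ‖ = ‖x - y + (σ - σ') • ξ‖ * ψ ξ := by
      rw [Real.norm_eq_abs, abs_mul, abs_norm, abs_of_nonneg (hψ_nonneg ξ)]
    rw [this]
    calc ‖x - y + (σ - σ') • ξ‖ * ψ ξ ≤ (‖x - y‖ + |σ - σ'| * ‖ξ‖) * ψ ξ :=
          mul_le_mul_of_nonneg_right h1 (hψ_nonneg ξ)
      _ = ‖x - y‖ * ψ ξ + |σ - σ'| * (‖ξ‖ * ψ ξ) := by ring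
  -- upper bound
  have hub : ∀ f : {f : EuclideanSpace ℝ (Fin m) → ℝ // ∀ x y, |f x - f y| ≤ ‖x - y‖},
      (∫ ξ, f.1 (σ • ξ + x) * ψ ξ) - ∫ ξ, f.1 (σ' • ξ + y) * ψ ξ
        ≤ ∫ ξ, ‖x - y + (σ - σ') • ξ‖ * ψ ξ := by
    intro f
    rw [← integral_sub (hInt f.1 f.2 σ x) (hInt f.1 f.2 σ' y)]
    refine integral_mono ((hInt f.1 f.2 σ x).sub (hInt f.1 f.2 σ' y)) hRHS_int fun ξ => ?_
    have key : (σ • ξ + x) - (σ' • ξ + y) = x - y + (σ - σ') • ξ := by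
      rw [sub_smul]; abel
    have h2 := f.2 (σ • ξ + x) (σ' • ξ + y)
    rw [key] at h2
    have h3 : f.1 (σ • ξ + x) - f.1 (σ' • ξ + y) ≤ ‖x - y + (σ - σ') • ξ‖ :=
      (le_abs_self _).trans h2
    have := mul_le_mul_of_nonneg_right h3 (hψ_nonneg ξ)
    simp only
    rw [← sub_mul]
    exact this
  -- witness
  have hwit : ∃ g : {f : EuclideanSpace ℝ (Fin m) → ℝ // ∀ x y, |f x - f y| ≤ ‖x - y‖},
      ∀ ξ, g.1 (σ • ξ + x) - g.1 (σ' • ξ + y) = ‖x - y + (σ - σ') • ξ‖ := by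
    by_cases hss : σ = σ'
    · subst hss
      set u := ‖x - y‖⁻¹ • (x - y) with hu
      have hunorm : ‖u‖ ≤ 1 := by
        rw [hu, norm_smul, Real.norm_eq_abs, abs_inv, abs_norm]
        rcases eq_or_ne x y with h | h
        · simp [h]
        · rw [inv_mul_cancel₀ (norm_ne_zero_iff.2 (sub_ne_zero.2 h))]
      refine ⟨⟨fun z => ⟪z, u⟫, ?_⟩, ?_⟩
      · intro a b
        rw [← inner_sub_left]
        calc |⟪a - b, u⟫| ≤ ‖a - b‖ * ‖u‖ := abs_real_inner_le_norm _ _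
          _ ≤ ‖a - b‖ * 1 := by
              exact mul_le_mul_of_nonneg_left hunorm (norm_nonneg _)
          _ = ‖a - b‖ := mul_one _
      · intro ξ
        simp only
        rw [← inner_sub_left]
        have h1 : (σ • ξ + x) - (σ • ξ + y) = x - y := by abel
        rw [h1, hu, real_inner_smul_right, real_inner_self_eq_norm_mul_norm]
        have h2 : x - y + (σ - σ) • ξ = x - y := by simp
        rw [h2]
        rcases eq_or_ne x y with h | h
        · simp [h]
        · have hn : ‖x - y‖ ≠ 0 := norm_ne_zero_iff.2 (sub_ne_zero.2 h)
          field_simp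
    · have hne : σ' - σ ≠ 0 := sub_ne_zero.2 (Ne.symm hss)
      set c := (σ' - σ)⁻¹ with hc
      set α := c • (σ' • x - σ • y) with hα
      set s : ℝ := if σ' < σ then 1 else -1 with hs
      have habs : |s| = 1 := by
        rw [hs]; split <;> simp
      refine ⟨⟨fun z => s * ‖z - α‖, ?_⟩, ?_⟩
      · intro a b
        rw [← mul_sub, abs_mul, habs, one_mul]
        calc |‖a - α‖ - ‖b - α‖| ≤ ‖(a - α) - (b - α)‖ := abs_norm_sub_norm_le _ _
          _ = ‖a - b‖ := by rw [sub_sub_sub_cancel_right]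
      · intro ξ
        set w := ξ + c • (y - x) with hw
        have h1 : σ • ξ + x - α = σ • w := by
          rw [hα, hw, hc]
          match_scalars <;> field_simp <;> ring
        have h2 : σ' • ξ + y - α = σ' • w := by
          rw [hα, hw, hc]
          match_scalars <;> field_simp <;> ring
        have h3 : x - y + (σ - σ') • ξ = (σ - σ') • w := by
          rw [hw, hc]
          match_scalars <;> field_simp <;> ring
        simp only
        rw [h1, h2, h3, norm_smul, norm_smul, norm_smul,
            Real.norm_eq_abs, Real.norm_eq_abs, Real.norm_eq_abs,
            abs_of_pos hσ, abs_of_pos hσ']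
        have hkey : s * (σ - σ') = |σ - σ'| := by
          rw [hs]
          rcases lt_or_gt_of_ne hss with h | h
          · rw [if_neg (not_lt.2 h.le), abs_of_neg (sub_neg.2 h)]; ring
          · rw [if_pos h, abs_of_pos (sub_pos.2 h)]; ring
        rw [← hkey]; ring
  refine le_antisymm (iSup_le fun f => ENNReal.ofReal_le_ofReal (hub f)) ?_
  obtain ⟨g, hg⟩ := hwit
  have heq : (∫ ξ, g.1 (σ • ξ + x) * ψ ξ) - ∫ ξ, g.1 (σ' • ξ + y) * ψ ξ
      = ∫ ξ, ‖x - y + (σ - σ') • ξ‖ * ψ ξ := by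
    rw [← integral_sub (hInt g.1 g.2 σ x) (hInt g.1 g.2 σ' y)]
    refine integral_congr_ae (Filter.Eventually.of_forall fun ξ => ?_)
    simp only
    rw [← sub_mul, hg ξ]
  rw [← heq]
  exact le_iSup (fun f : {f : EuclideanSpace ℝ (Fin m) → ℝ // ∀ x y, |f x - f y| ≤ ‖x - y‖} =>
    ENNReal.ofReal ((∫ ξ, f.1 (σ • ξ + x) * ψ ξ) - ∫ ξ, f.1 (σ' • ξ + y) * ψ ξ)) g
end

section
/- Let μ₁ and μ₂ be Borel probability measures on ℝ with finite first moments, and assume each μᵢ has no singular continuous part, i.e. μᵢ is the sum of a purely atomic measure (a countable weighted sum of Dirac measures) and a measure absolutely continuous with respect to Lebesgue measure. Then sup{ ∫ f dμ₁ − ∫ f dμ₂ : f : ℝ → ℝ 1-Lipschitz and integrable with respect to both } = ∫_ℝ |F₁(z) − F₂(z)| dz, where Fᵢ(z) = μᵢ((−∞, z]) is the cumulative distribution function of μᵢ. -/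
open MeasureTheory Set
open scoped ENNReal


noncomputable def Kfun (μ : Measure ℝ) (t : ℝ) : ℝ :=
  if 0 < t then (μ (Set.Ici t)).toReal else -((μ (Set.Iio t)).toReal)

lemma bdd_intervalIntegrable {g : ℝ → ℝ} (hg : Measurable g) (hb : ∀ t, |g t| ≤ 1)
    (a b : ℝ) : IntervalIntegrable g volume a b := by
  refine IntervalIntegrable.mono_fun' (g := fun _ => (1:ℝ)) intervalIntegrable_const
    hg.aestronglyMeasurable ?_
  exact Filter.Eventually.of_forall fun t => by simpa [Real.norm_eq_abs] using hb t

lemma key_fubini (μ : Measure ℝ) [IsProbabilityMeasure μ]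
    (hm : Integrable (fun x => |x|) μ)
    (g : ℝ → ℝ) (hg : Measurable g) (hb : ∀ t, |g t| ≤ 1) :
    Integrable (fun t => g t * Kfun μ t) volume ∧
      ∫ x, (∫ t in (0:ℝ)..x, g t) ∂μ = ∫ t, g t * Kfun μ t := by
  classical
  set Sφ : Set (ℝ × ℝ) := {p | 0 < p.2 ∧ p.2 ≤ p.1} with hSφdef
  set Sψ : Set (ℝ × ℝ) := {p | p.1 < p.2 ∧ p.2 ≤ 0} with hSψdef
  have hSφ : MeasurableSet Sφ :=
    (measurableSet_lt measurable_const measurable_snd).inter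
      (measurableSet_le measurable_snd measurable_fst)
  have hSψ : MeasurableSet Sψ :=
    (measurableSet_lt measurable_fst measurable_snd).inter
      (measurableSet_le measurable_snd measurable_const)
  set φ : ℝ → ℝ → ℝ := fun x t => Sφ.indicator (fun p : ℝ × ℝ => g p.2) (x, t) with hφdef
  set ψ : ℝ → ℝ → ℝ := fun x t => Sψ.indicator (fun p : ℝ × ℝ => g p.2) (x, t) with hψdef
  have hmom : ∫⁻ x, ENNReal.ofReal |x| ∂μ < ⊤ := by
    have h := hm.hasFiniteIntegral
    rw [HasFiniteIntegral] at h
    simp_rw [← ofReal_norm_eq_enorm, Real.norm_eq_abs, abs_abs] at h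
    exact h
  -- integrability of the two indicator kernels on the product
  have hint : ∀ (S : Set (ℝ × ℝ)), MeasurableSet S →
      (∀ x, Prod.mk x ⁻¹' S ⊆ Set.Ioc (min x 0) (max x 0)) →
      Integrable (fun p : ℝ × ℝ => S.indicator (fun p : ℝ × ℝ => g p.2) p) (μ.prod volume) := by
    intro S hS hslice
    refine ⟨((hg.comp measurable_snd).indicator hS).aestronglyMeasurable, ?_⟩
    have hb' : ∀ p : ℝ × ℝ, ‖S.indicator (fun p : ℝ × ℝ => g p.2) p‖₊ ≤
        S.indicator (fun _ => (1 : ℝ≥0∞)) p := by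
      intro p
      by_cases hp : p ∈ S
      · simp only [Set.indicator_of_mem hp]
        have : (‖g p.2‖₊ : ℝ≥0∞) ≤ 1 := by
          rw [ENNReal.coe_le_one_iff, ← NNReal.coe_le_coe]
          simpa [Real.norm_eq_abs] using hb p.2
        exact this
      · simp [Set.indicator_of_notMem hp]
    calc ∫⁻ p, ‖S.indicator (fun p : ℝ × ℝ => g p.2) p‖₊ ∂(μ.prod volume)
        ≤ ∫⁻ p, S.indicator (fun _ => (1 : ℝ≥0∞)) p ∂(μ.prod volume) :=
          lintegral_mono hb'
      _ = (μ.prod volume) S := by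
          rw [lintegral_indicator hS]; simp
      _ = ∫⁻ x, volume (Prod.mk x ⁻¹' S) ∂μ := Measure.prod_apply hS
      _ ≤ ∫⁻ x, ENNReal.ofReal |x| ∂μ := by
          refine lintegral_mono fun x => ?_
          calc volume (Prod.mk x ⁻¹' S) ≤ volume (Set.Ioc (min x 0) (max x 0)) :=
                measure_mono (hslice x)
            _ ≤ ENNReal.ofReal |x| := by
                rw [Real.volume_Ioc]
                apply ENNReal.ofReal_le_ofReal
                rcases le_total x 0 with h | h <;>
                  simp [min_eq_left, min_eq_right, max_eq_left, max_eq_right, h, abs_of_nonpos,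
                    abs_of_nonneg]
      _ < ⊤ := hmom
  have hφint : Integrable (fun p : ℝ × ℝ => Sφ.indicator (fun p : ℝ × ℝ => g p.2) p)
      (μ.prod volume) := by
    refine hint Sφ hSφ fun x => ?_
    intro t ht
    obtain ⟨h1, h2⟩ := ht
    exact ⟨lt_of_le_of_lt (min_le_right _ _) h1, le_trans h2 (le_max_left _ _)⟩
  have hψint : Integrable (fun p : ℝ × ℝ => Sψ.indicator (fun p : ℝ × ℝ => g p.2) p)
      (μ.prod volume) := by
    refine hint Sψ hSψ fun x => ?_
    intro t ht
    obtain ⟨h1, h2⟩ := ht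
    exact ⟨lt_of_lt_of_le (lt_of_le_of_lt (min_le_left _ _) h1) le_rfl,
      le_trans h2 (le_max_right _ _)⟩
  have hswφ : (∫ x, ∫ t, φ x t ∂volume ∂μ) = ∫ t, ∫ x, φ x t ∂μ ∂volume :=
    integral_integral_swap hφint
  have hswψ : (∫ x, ∫ t, ψ x t ∂volume ∂μ) = ∫ t, ∫ x, ψ x t ∂μ ∂volume :=
    integral_integral_swap hψint
  have hAeq : ∀ t, (∫ x, φ x t ∂μ) = if 0 < t then g t * (μ (Set.Ici t)).toReal else 0 := by
    intro t
    by_cases ht : 0 < t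
    · have heq : (fun x => φ x t) = fun x => (Set.Ici t).indicator (fun _ => g t) x := by
        funext x
        by_cases hx : t ≤ x <;>
          simp [hφdef, hSφdef, Set.indicator_apply, Set.mem_setOf_eq, hx, ht]
      rw [heq, integral_indicator_const _ measurableSet_Ici, smul_eq_mul, mul_comm, if_pos ht, measureReal_def]
    · have heq : (fun x => φ x t) = fun _ => (0:ℝ) := by
        funext x; simp [hφdef, hSφdef, Set.indicator_apply, ht]
      rw [heq]; simp [ht]
  have hBeq : ∀ t, (∫ x, ψ x t ∂μ) = if 0 < t then 0 else g t * (μ (Set.Iio t)).toReal := by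
    intro t
    by_cases ht : 0 < t
    · have heq : (fun x => ψ x t) = fun _ => (0:ℝ) := by
        funext x; simp [hψdef, hSψdef, Set.indicator_apply, not_le.mpr ht]
      rw [heq]; simp [ht]
    · have heq : (fun x => ψ x t) = fun x => (Set.Iio t).indicator (fun _ => g t) x := by
        funext x
        by_cases hx : x < t <;>
          simp [hψdef, hSψdef, Set.indicator_apply, Set.mem_setOf_eq, hx, ht, not_lt.mp ht]
      rw [heq, integral_indicator_const _ measurableSet_Iio, smul_eq_mul, mul_comm]
      simp [ht, measureReal_def]
  have hPeq : ∀ x, (∫ t in (0:ℝ)..x, g t) = (∫ t, φ x t ∂volume) - ∫ t, ψ x t ∂volume := by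
    intro x
    have h1 : (fun t => φ x t) = fun t => (Set.Ioc 0 x).indicator g t := by
      funext t
      simp [hφdef, hSφdef, Set.indicator_apply, Set.mem_Ioc, Set.mem_setOf_eq]
    have h2 : (fun t => ψ x t) = fun t => (Set.Ioc x 0).indicator g t := by
      funext t
      simp [hψdef, hSψdef, Set.indicator_apply, Set.mem_Ioc, Set.mem_setOf_eq]
    simp only [intervalIntegral]
    rw [← integral_indicator measurableSet_Ioc, ← integral_indicator measurableSet_Ioc,
      ← h1, ← h2]
  have hptw : ∀ t, ((if 0 < t then g t * (μ (Set.Ici t)).toReal else 0)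
      - (if 0 < t then 0 else g t * (μ (Set.Iio t)).toReal)) = g t * Kfun μ t := by
    intro t
    by_cases ht : 0 < t <;> simp [Kfun, ht, mul_neg, sub_eq_add_neg]
  have hintA : Integrable (fun t => ∫ x, φ x t ∂μ) volume := hφint.integral_prod_right
  have hintB : Integrable (fun t => ∫ x, ψ x t ∂μ) volume := hψint.integral_prod_right
  constructor
  · have : Integrable (fun t => (∫ x, φ x t ∂μ) - ∫ x, ψ x t ∂μ) volume := hintA.sub hintB
    refine this.congr (Filter.Eventually.of_forall fun t => ?_)
    show (∫ x, φ x t ∂μ) - (∫ x, ψ x t ∂μ) = g t * Kfun μ t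
    rw [hAeq t, hBeq t, hptw t]
  · calc ∫ x, (∫ t in (0:ℝ)..x, g t) ∂μ
        = ∫ x, ((∫ t, φ x t ∂volume) - ∫ t, ψ x t ∂volume) ∂μ := by
          exact integral_congr_ae (Filter.Eventually.of_forall hPeq)
      _ = (∫ x, ∫ t, φ x t ∂volume ∂μ) - ∫ x, ∫ t, ψ x t ∂volume ∂μ :=
          integral_sub hφint.integral_prod_left hψint.integral_prod_left
      _ = (∫ t, ∫ x, φ x t ∂μ ∂volume) - ∫ t, ∫ x, ψ x t ∂μ ∂volume := by rw [hswφ, hswψ]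
      _ = ∫ t, ((∫ x, φ x t ∂μ) - ∫ x, ψ x t ∂μ) ∂volume := (integral_sub hintA hintB).symm
      _ = ∫ t, g t * Kfun μ t := by
          refine integral_congr_ae (Filter.Eventually.of_forall fun t => ?_)
          show (∫ x, φ x t ∂μ) - (∫ x, ψ x t ∂μ) = g t * Kfun μ t
          rw [hAeq t, hBeq t, hptw t]

lemma Kdiff_ae (μ₁ μ₂ : Measure ℝ) [IsProbabilityMeasure μ₁] [IsProbabilityMeasure μ₂] :
    (fun t => Kfun μ₁ t - Kfun μ₂ t) =ᵐ[(volume : Measure ℝ)]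
    (fun t => (μ₂ (Set.Iic t)).toReal - (μ₁ (Set.Iic t)).toReal) := by
  have h₁ := meas_le_ae_eq_meas_lt μ₁ (volume : Measure ℝ) id
  have h₂ := meas_le_ae_eq_meas_lt μ₂ (volume : Measure ℝ) id
  filter_upwards [h₁, h₂] with t ht₁ ht₂
  have key : ∀ (μ : Measure ℝ) [IsProbabilityMeasure μ], μ {a : ℝ | t ≤ a} = μ {a : ℝ | t < a} →
      ((μ (Set.Ici t)).toReal = 1 - (μ (Set.Iic t)).toReal ∧
        (μ (Set.Iio t)).toReal = (μ (Set.Iic t)).toReal) := by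
    intro μ _ ht
    have hIci : μ (Set.Ici t) = μ (Set.Ioi t) := ht
    have hIoi : μ (Set.Ioi t) = 1 - μ (Set.Iic t) := by
      rw [← Set.compl_Iic, measure_compl measurableSet_Iic (measure_ne_top _ _), measure_univ]
    have hIio : μ (Set.Iio t) = 1 - μ (Set.Ici t) := by
      rw [← Set.compl_Ici, measure_compl measurableSet_Ici (measure_ne_top _ _), measure_univ]
    constructor
    · rw [hIci, hIoi, ENNReal.toReal_sub_of_le prob_le_one ENNReal.one_ne_top, ENNReal.toReal_one]
    · rw [hIio, hIci, hIoi, ENNReal.sub_sub_cancel ENNReal.one_ne_top prob_le_one]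
  obtain ⟨e₁, e₁'⟩ := key μ₁ ht₁
  obtain ⟨e₂, e₂'⟩ := key μ₂ ht₂
  by_cases ht : 0 < t
  · simp only [Kfun, if_pos ht, e₁, e₂]; ring
  · simp only [Kfun, if_neg ht, e₁', e₂']; ring

lemma value_eq (μ₁ μ₂ : Measure ℝ) [IsProbabilityMeasure μ₁] [IsProbabilityMeasure μ₂]
    (hm₁ : Integrable (fun x => |x|) μ₁) (hm₂ : Integrable (fun x => |x|) μ₂)
    (g : ℝ → ℝ) (hg : Measurable g) (hb : ∀ t, |g t| ≤ 1) :
    Integrable (fun t => g t * ((μ₂ (Set.Iic t)).toReal - (μ₁ (Set.Iic t)).toReal)) volume ∧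
    (∫ x, (∫ t in (0:ℝ)..x, g t) ∂μ₁) - (∫ x, (∫ t in (0:ℝ)..x, g t) ∂μ₂)
      = ∫ t, g t * ((μ₂ (Set.Iic t)).toReal - (μ₁ (Set.Iic t)).toReal) := by
  obtain ⟨i₁, e₁⟩ := key_fubini μ₁ hm₁ g hg hb
  obtain ⟨i₂, e₂⟩ := key_fubini μ₂ hm₂ g hg hb
  have hae : (fun t => g t * Kfun μ₁ t - g t * Kfun μ₂ t) =ᵐ[(volume : Measure ℝ)]
      (fun t => g t * ((μ₂ (Set.Iic t)).toReal - (μ₁ (Set.Iic t)).toReal)) := by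
    filter_upwards [Kdiff_ae μ₁ μ₂] with t ht
    rw [← mul_sub, ht]
  refine ⟨(i₁.sub i₂).congr hae, ?_⟩
  rw [e₁, e₂, ← integral_sub i₁ i₂]
  exact integral_congr_ae hae

lemma primitive_lip {g : ℝ → ℝ} (hg : Measurable g) (hb : ∀ t, |g t| ≤ 1) :
    ∀ x y, |(∫ t in (0:ℝ)..x, g t) - (∫ t in (0:ℝ)..y, g t)| ≤ |x - y| := by
  intro x y
  have hxy : (∫ t in (0:ℝ)..x, g t) - (∫ t in (0:ℝ)..y, g t) = ∫ t in y..x, g t := by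
    rw [← intervalIntegral.integral_add_adjacent_intervals
      (bdd_intervalIntegrable hg hb 0 y) (bdd_intervalIntegrable hg hb y x)]
    ring
  rw [hxy]
  have h := intervalIntegral.norm_integral_le_of_norm_le_const (C := 1) (f := g)
    (a := y) (b := x) (fun t _ => by simpa [Real.norm_eq_abs] using hb t)
  simpa [Real.norm_eq_abs, abs_sub_comm] using h

lemma near_const {f : ℝ → ℝ} (hf : ∀ x y, |f x - f y| ≤ |x - y|) (hcf : Continuous f)
    {h : ℝ} (hh : 0 < h) (x : ℝ) :
    |(∫ t in x..(x + h), f t) - h * f x| ≤ h * h := by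
  have e : (∫ t in x..(x + h), (f t - f x)) = (∫ t in x..(x + h), f t) - h * f x := by
    rw [intervalIntegral.integral_sub (hcf.intervalIntegrable _ _) intervalIntegrable_const,
      intervalIntegral.integral_const]
    simp [smul_eq_mul]
  rw [← e]
  have hbd : ∀ t ∈ Set.uIoc x (x + h), ‖f t - f x‖ ≤ h := by
    intro t ht
    rw [Set.uIoc_of_le (by linarith)] at ht
    obtain ⟨h1, h2⟩ := ht
    rw [Real.norm_eq_abs]
    calc |f t - f x| ≤ |t - x| := hf t x
      _ ≤ h := by rw [abs_of_pos (by linarith)]; linarith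
  have h2 := intervalIntegral.norm_integral_le_of_norm_le_const hbd
  rw [Real.norm_eq_abs] at h2
  calc |(∫ t in x..(x + h), (f t - f x))| ≤ h * |x + h - x| := h2
    _ = h * h := by rw [show x + h - x = h by ring, abs_of_pos hh]

lemma avg_close {f : ℝ → ℝ} (hf : ∀ x y, |f x - f y| ≤ |x - y|) (hcf : Continuous f)
    {h : ℝ} (hh : 0 < h) (x : ℝ) :
    |(∫ t in (0:ℝ)..x, (f (t + h) - f t) / h) - (f x - f 0)| ≤ 2 * h := by
  have hint : ∀ a b : ℝ, IntervalIntegrable f volume a b := fun a b => hcf.intervalIntegrable _ _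
  have hcf' : Continuous fun t => f (t + h) := hcf.comp (continuous_id.add continuous_const)
  have e1 : (∫ t in (0:ℝ)..x, (f (t + h) - f t) / h)
      = ((∫ t in (0:ℝ)..x, f (t + h)) - ∫ t in (0:ℝ)..x, f t) / h := by
    rw [intervalIntegral.integral_div,
      intervalIntegral.integral_sub (hcf'.intervalIntegrable _ _) (hint 0 x)]
  have e2 : (∫ t in (0:ℝ)..x, f (t + h)) = ∫ t in h..(x + h), f t := by
    simpa using intervalIntegral.integral_comp_add_right (a := (0:ℝ)) (b := x) f h
  have e3 : (∫ t in h..(x + h), f t)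
      = -(∫ t in (0:ℝ)..h, f t) + (∫ t in (0:ℝ)..x, f t) + ∫ t in x..(x + h), f t := by
    have a1 := intervalIntegral.integral_add_adjacent_intervals (hint h 0) (hint 0 x)
    have a2 := intervalIntegral.integral_add_adjacent_intervals (hint h x) (hint x (x + h))
    have a3 : (∫ t in h..(0:ℝ), f t) = -(∫ t in (0:ℝ)..h, f t) :=
      intervalIntegral.integral_symm _ _
    linarith
  have b1 := near_const hf hcf hh x
  have b2 := near_const hf hcf hh 0
  rw [zero_add] at b2
  rw [e1, e2, e3]
  have hexp : (-(∫ t in (0:ℝ)..h, f t) + (∫ t in (0:ℝ)..x, f t) + (∫ t in x..(x + h), f t)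
      - ∫ t in (0:ℝ)..x, f t) / h - (f x - f 0)
      = (((∫ t in x..(x + h), f t) - h * f x) - ((∫ t in (0:ℝ)..h, f t) - h * f 0)) / h := by
    field_simp
    ring
  rw [hexp]
  rw [abs_div, abs_of_pos hh]
  rw [div_le_iff₀ hh]
  calc |((∫ t in x..(x + h), f t) - h * f x) - ((∫ t in (0:ℝ)..h, f t) - h * f 0)|
      ≤ |(∫ t in x..(x + h), f t) - h * f x| + |(∫ t in (0:ℝ)..h, f t) - h * f 0| :=
        abs_sub _ _
    _ ≤ h * h + h * h := add_le_add b1 b2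
    _ = 2 * h * h := by ring



/-- for Borel probability measures `μ₁, μ₂` on `ℝ` with finite first
moments and no singular continuous part (each is a countable weighted sum of Dirac
measures plus a measure absolutely continuous with respect to Lebesgue measure), the
order-1 Wasserstein distance equals `∫ |F₁(z) − F₂(z)| dz`, where `Fᵢ` is the cumulative
distribution function of `μᵢ`. -/
theorem wasserstein_on_real_eq_integral_cdf_diff
    (μ₁ μ₂ : Measure ℝ) [IsProbabilityMeasure μ₁] [IsProbabilityMeasure μ₂]
    (hm₁ : Integrable (fun x => |x|) μ₁) (hm₂ : Integrable (fun x => |x|) μ₂)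
    (hd₁ : ∃ (a : ℕ → ℝ) (w : ℕ → ENNReal) (ν : Measure ℝ),
      μ₁ = Measure.sum (fun k => w k • Measure.dirac (a k)) + ν ∧ ν ≪ volume)
    (hd₂ : ∃ (a : ℕ → ℝ) (w : ℕ → ENNReal) (ν : Measure ℝ),
      μ₂ = Measure.sum (fun k => w k • Measure.dirac (a k)) + ν ∧ ν ≪ volume) :
    (⨆ f : {f : ℝ → ℝ //
        (∀ x y, |f x - f y| ≤ |x - y|) ∧ Integrable f μ₁ ∧ Integrable f μ₂},
      ENNReal.ofReal ((∫ x, f.1 x ∂μ₁) - ∫ x, f.1 x ∂μ₂)) =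
      ENNReal.ofReal (∫ z, |(μ₁ (Set.Iic z)).toReal - (μ₂ (Set.Iic z)).toReal|) := by
  classical
  set D : ℝ → ℝ := fun t => (μ₂ (Set.Iic t)).toReal - (μ₁ (Set.Iic t)).toReal with hD
  have hDint : Integrable D volume := by
    have := (value_eq μ₁ μ₂ hm₁ hm₂ (fun _ => 1) measurable_const (fun t => by norm_num)).1
    simpa [hD] using this
  have habs : Integrable (fun t => |D t|) volume := hDint.abs
  have hIeq : (∫ z, |(μ₁ (Set.Iic z)).toReal - (μ₂ (Set.Iic z)).toReal|) = ∫ t, |D t| := by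
    simp_rw [hD, abs_sub_comm]
  rw [hIeq]
  have hDmeas : Measurable D := by
    have h1 : Measurable fun t => (μ₁ (Set.Iic t)).toReal :=
      Monotone.measurable fun a b hab =>
        ENNReal.toReal_mono (measure_ne_top _ _) (measure_mono (Set.Iic_subset_Iic.mpr hab))
    have h2 : Measurable fun t => (μ₂ (Set.Iic t)).toReal :=
      Monotone.measurable fun a b hab =>
        ENNReal.toReal_mono (measure_ne_top _ _) (measure_mono (Set.Iic_subset_Iic.mpr hab))
    exact h2.sub h1
  -- the generic upper bound for admissible g
  have hGD : ∀ (g : ℝ → ℝ), Measurable g → (∀ t, |g t| ≤ 1) →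
      (∫ t, g t * D t) ≤ ∫ t, |D t| := by
    intro g hgm hgb
    refine integral_mono ?_ habs fun t => ?_
    · have := (value_eq μ₁ μ₂ hm₁ hm₂ g hgm hgb).1
      simpa [hD] using this
    · calc g t * D t ≤ |g t * D t| := le_abs_self _
        _ = |g t| * |D t| := abs_mul _ _
        _ ≤ 1 * |D t| := mul_le_mul_of_nonneg_right (hgb t) (abs_nonneg _)
        _ = |D t| := one_mul _
  apply le_antisymm
  · -- upper bound
    apply iSup_le
    rintro ⟨f, hf, hf1, hf2⟩
    simp only
    apply ENNReal.ofReal_le_ofReal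
    have hlip : LipschitzWith 1 f := LipschitzWith.of_dist_le_mul (by
      intro x y
      rw [Real.dist_eq, Real.dist_eq, NNReal.coe_one, one_mul]
      exact hf x y)
    have hcf : Continuous f := hlip.continuous
    refine le_of_forall_pos_le_add ?_
    intro ε hε
    set h : ℝ := ε / 4 with hh
    have hhpos : 0 < h := by positivity
    set g : ℝ → ℝ := fun t => (f (t + h) - f t) / h with hg
    have hgm : Measurable g :=
      (((hcf.comp (continuous_id.add continuous_const)).sub hcf).div_const h).measurable
    have hgb : ∀ t, |g t| ≤ 1 := by
      intro t
      rw [hg]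
      simp only
      rw [abs_div, abs_of_pos hhpos, div_le_one hhpos]
      calc |f (t + h) - f t| ≤ |t + h - t| := hf _ _
        _ = h := by rw [show t + h - t = h by ring, abs_of_pos hhpos]
    set P : ℝ → ℝ := fun x => ∫ t in (0:ℝ)..x, g t with hP
    have hPlip := primitive_lip hgm hgb
    have hPcont : Continuous P := by
      have : LipschitzWith 1 P := LipschitzWith.of_dist_le_mul (by
        intro x y
        rw [Real.dist_eq, Real.dist_eq, NNReal.coe_one, one_mul]
        exact hPlip x y)
      exact this.continuous
    have hPbd : ∀ x, ‖P x‖ ≤ |x| := by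
      intro x
      have := hPlip x 0
      simpa [hP, Real.norm_eq_abs] using this
    have hPint₁ : Integrable P μ₁ :=
      Integrable.mono' hm₁ hPcont.aestronglyMeasurable (Filter.Eventually.of_forall hPbd)
    have hPint₂ : Integrable P μ₂ :=
      Integrable.mono' hm₂ hPcont.aestronglyMeasurable (Filter.Eventually.of_forall hPbd)
    have hval := value_eq μ₁ μ₂ hm₁ hm₂ g hgm hgb
    have hclose : ∀ x, ‖f x - f 0 - P x‖ ≤ 2 * h := by
      intro x
      rw [Real.norm_eq_abs, abs_sub_comm]
      exact avg_close hf hcf hhpos x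
    have hkey : ∀ (μ : Measure ℝ), IsProbabilityMeasure μ → Integrable f μ → Integrable P μ →
        |(∫ x, f x ∂μ) - f 0 - ∫ x, P x ∂μ| ≤ 2 * h := by
      intro μ hμ hfi hPi
      have e1 : ∫ x, (f x - f 0 - P x) ∂μ = (∫ x, (f x - f 0) ∂μ) - ∫ x, P x ∂μ :=
        integral_sub (hfi.sub (integrable_const (f 0))) hPi
      have e2 : ∫ x, (f x - f 0) ∂μ = (∫ x, f x ∂μ) - f 0 := by
        have h3 := integral_sub hfi (integrable_const (μ := μ) (f 0))
        simpa [measure_univ] using h3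
      have h1 : (∫ x, f x ∂μ) - f 0 - (∫ x, P x ∂μ) = ∫ x, (f x - f 0 - P x) ∂μ := by
        rw [e1, e2]
      rw [h1]
      have := norm_integral_le_of_norm_le_const (μ := μ) (f := fun x => f x - f 0 - P x)
        (C := 2 * h) (Filter.Eventually.of_forall hclose)
      simpa [Real.norm_eq_abs, measure_univ] using this
    have k₁ := hkey μ₁ inferInstance hf1 hPint₁
    have k₂ := hkey μ₂ inferInstance hf2 hPint₂
    have hPdiff : (∫ x, P x ∂μ₁) - (∫ x, P x ∂μ₂) ≤ ∫ t, |D t| := by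
      have := hval.2
      rw [hP]
      rw [this]
      have h2 := hGD g hgm hgb
      simpa [hD] using h2
    have habs₁ := abs_le.mp k₁
    have habs₂ := abs_le.mp k₂
    have : (∫ x, f x ∂μ₁) - (∫ x, f x ∂μ₂) ≤ ((∫ x, P x ∂μ₁) - ∫ x, P x ∂μ₂) + 4 * h := by
      obtain ⟨l1, r1⟩ := habs₁
      obtain ⟨l2, r2⟩ := habs₂
      linarith
    calc (∫ x, f x ∂μ₁) - (∫ x, f x ∂μ₂) ≤ ((∫ x, P x ∂μ₁) - ∫ x, P x ∂μ₂) + 4 * h := this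
      _ ≤ (∫ t, |D t|) + 4 * h := by linarith
      _ = (∫ t, |D t|) + ε := by rw [hh]; ring
  · -- lower bound: explicit optimizer
    set g : ℝ → ℝ := fun t => if 0 ≤ D t then 1 else -1 with hg
    have hgm : Measurable g :=
      Measurable.ite (measurableSet_le measurable_const hDmeas) measurable_const measurable_const
    have hgb : ∀ t, |g t| ≤ 1 := by
      intro t; rw [hg]; simp only; split_ifs <;> simp
    set P : ℝ → ℝ := fun x => ∫ t in (0:ℝ)..x, g t with hP
    have hPlip := primitive_lip hgm hgb
    have hPcont : Continuous P := by
      have : LipschitzWith 1 P := LipschitzWith.of_dist_le_mul (by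
        intro x y
        rw [Real.dist_eq, Real.dist_eq, NNReal.coe_one, one_mul]
        exact hPlip x y)
      exact this.continuous
    have hPbd : ∀ x, ‖P x‖ ≤ |x| := by
      intro x
      have := hPlip x 0
      simpa [hP, Real.norm_eq_abs] using this
    have hPint₁ : Integrable P μ₁ :=
      Integrable.mono' hm₁ hPcont.aestronglyMeasurable (Filter.Eventually.of_forall hPbd)
    have hPint₂ : Integrable P μ₂ :=
      Integrable.mono' hm₂ hPcont.aestronglyMeasurable (Filter.Eventually.of_forall hPbd)
    have hval := value_eq μ₁ μ₂ hm₁ hm₂ g hgm hgb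
    have hgD : ∀ t, g t * D t = |D t| := by
      intro t
      rw [hg]
      simp only
      split_ifs with ht
      · rw [one_mul, abs_of_nonneg ht]
      · rw [neg_one_mul, abs_of_neg (lt_of_not_ge ht)]
    have hPval : (∫ x, P x ∂μ₁) - (∫ x, P x ∂μ₂) = ∫ t, |D t| := by
      rw [hP, hval.2]
      exact integral_congr_ae (Filter.Eventually.of_forall fun t => hgD t)
    refine le_trans (le_of_eq ?_)
      (le_iSup (fun f : {f : ℝ → ℝ //
          (∀ x y, |f x - f y| ≤ |x - y|) ∧ Integrable f μ₁ ∧ Integrable f μ₂} =>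
        ENNReal.ofReal ((∫ x, f.1 x ∂μ₁) - ∫ x, f.1 x ∂μ₂))
        ⟨P, hPlip, hPint₁, hPint₂⟩)
    rw [hPval]
end

section
/- Let μ₁ and μ₂ be Borel probability measures on ℝ with finite first moments, and let f : ℝ → ℝ be continuously differentiable with bounded derivative. Then ∫ f dμ₁ − ∫ f dμ₂ = −∫_ℝ f'(z)·(F₁(z) − F₂(z)) dz, where Fᵢ(z) = μᵢ((−∞, z]). -/
open MeasureTheory

namespace CdfIBP

open Set

/-- The kernel appearing in the Fubini argument. -/
noncomputable def k (f : ℝ → ℝ) (x z : ℝ) : ℝ :=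
  (Set.Ioc (0:ℝ) x).indicator (deriv f) z - (Set.Ioc x (0:ℝ)).indicator (deriv f) z

/-- The one-sided CDF-type function appearing after Fubini. -/
noncomputable def G (μ : Measure ℝ) (z : ℝ) : ℝ :=
  if 0 < z then (μ (Set.Ici z)).toReal else -(μ (Set.Iio z)).toReal

/-- FTC step: `f x - f 0 = ∫ z, k f x z`. -/
lemma sub_eq (f : ℝ → ℝ) (hf : ContDiff ℝ 1 f) (x : ℝ) :
    f x - f 0 = ∫ z, k f x z := by
  have hcont : Continuous (deriv f) := hf.continuous_deriv le_rfl
  have hFTC : ∫ z in (0:ℝ)..x, deriv f z = f x - f 0 :=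
    intervalIntegral.integral_deriv_eq_sub
      (fun z _ => hf.differentiable one_ne_zero z)
      (hcont.intervalIntegrable _ _)
  rcases le_or_gt 0 x with h | h
  · have he : Set.Ioc x (0:ℝ) = ∅ := Set.Ioc_eq_empty (by simpa using h)
    simp only [k, he, Set.indicator_empty, Pi.zero_apply, sub_zero]
    rw [integral_indicator measurableSet_Ioc, ← intervalIntegral.integral_of_le h, hFTC]
  · have he : Set.Ioc (0:ℝ) x = ∅ := Set.Ioc_eq_empty (by simpa using h.le)
    simp only [k, he, Set.indicator_empty, Pi.zero_apply, zero_sub]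
    rw [integral_neg, integral_indicator measurableSet_Ioc,
      ← intervalIntegral.integral_of_le h.le, ← intervalIntegral.integral_symm, hFTC]

lemma k_meas (f : ℝ → ℝ) (hf : ContDiff ℝ 1 f) :
    Measurable (fun p : ℝ × ℝ => k f p.1 p.2) := by
  have hd : Measurable (deriv f) := (hf.continuous_deriv le_rfl).measurable
  have h1 : MeasurableSet {p : ℝ × ℝ | 0 < p.2 ∧ p.2 ≤ p.1} :=
    (measurableSet_lt measurable_const measurable_snd).inter
      (measurableSet_le measurable_snd measurable_fst)
  have h2 : MeasurableSet {p : ℝ × ℝ | p.1 < p.2 ∧ p.2 ≤ 0} :=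
    (measurableSet_lt measurable_fst measurable_snd).inter
      (measurableSet_le measurable_snd measurable_const)
  have heq : (fun p : ℝ × ℝ => k f p.1 p.2) = fun p =>
      (if p ∈ {p : ℝ × ℝ | 0 < p.2 ∧ p.2 ≤ p.1} then deriv f p.2 else 0)
        - (if p ∈ {p : ℝ × ℝ | p.1 < p.2 ∧ p.2 ≤ 0} then deriv f p.2 else 0) := by
    funext p
    simp [k, Set.indicator_apply, Set.mem_Ioc]
  rw [heq]
  exact (Measurable.ite h1 (hd.comp measurable_snd) measurable_const).sub
    (Measurable.ite h2 (hd.comp measurable_snd) measurable_const)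

lemma k_int_fixed (f : ℝ → ℝ) (hf : ContDiff ℝ 1 f) (x : ℝ) :
    Integrable (fun z => k f x z) volume := by
  have hd : Continuous (deriv f) := hf.continuous_deriv le_rfl
  exact ((hd.integrableOn_Ioc).integrable_indicator measurableSet_Ioc).sub
    ((hd.integrableOn_Ioc).integrable_indicator measurableSet_Ioc)

lemma k_norm_le (f : ℝ → ℝ) (C : ℝ) (hC : ∀ x, |deriv f x| ≤ C) (x z : ℝ) :
    ‖k f x z‖ ≤ (Set.uIoc (0:ℝ) x).indicator (fun _ => C) z := by
  have hC0 : 0 ≤ C := le_trans (abs_nonneg _) (hC 0)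
  by_cases h1 : z ∈ Set.Ioc (0:ℝ) x
  · have hz : z ∈ Set.uIoc (0:ℝ) x := Set.Ioc_subset_uIoc h1
    have h2 : z ∉ Set.Ioc x (0:ℝ) := by
      simp only [Set.mem_Ioc] at h1 ⊢
      intro h2
      linarith [h1.1, h1.2, h2.1, h2.2]
    simp only [k, Set.indicator_of_mem h1, Set.indicator_of_notMem h2, sub_zero,
      Set.indicator_of_mem hz]
    simpa [Real.norm_eq_abs] using hC z
  · by_cases h2 : z ∈ Set.Ioc x (0:ℝ)
    · have hz : z ∈ Set.uIoc (0:ℝ) x := Set.Ioc_subset_uIoc' h2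
      simp only [k, Set.indicator_of_notMem h1, Set.indicator_of_mem h2, zero_sub,
        Set.indicator_of_mem hz, norm_neg]
      simpa [Real.norm_eq_abs] using hC z
    · simp only [k, Set.indicator_of_notMem h1, Set.indicator_of_notMem h2, sub_zero,
        norm_zero]
      exact Set.indicator_nonneg (fun _ _ => hC0) z

lemma k_integrable (μ : Measure ℝ) [IsProbabilityMeasure μ]
    (hm : Integrable (fun x => |x|) μ) (f : ℝ → ℝ) (hf : ContDiff ℝ 1 f)
    (C : ℝ) (hC : ∀ x, |deriv f x| ≤ C) :
    Integrable (fun p : ℝ × ℝ => k f p.1 p.2) (μ.prod volume) := by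
  have hmeas : AEStronglyMeasurable (fun p : ℝ × ℝ => k f p.1 p.2) (μ.prod volume) :=
    (k_meas f hf).aestronglyMeasurable
  rw [integrable_prod_iff hmeas]
  refine ⟨Filter.Eventually.of_forall fun x => k_int_fixed f hf x, ?_⟩
  have hC0 : 0 ≤ C := le_trans (abs_nonneg _) (hC 0)
  refine Integrable.mono' (hm.const_mul C) hmeas.norm.integral_prod_right' ?_
  refine Filter.Eventually.of_forall fun x => ?_
  have hnn : 0 ≤ ∫ z, ‖k f x z‖ := integral_nonneg fun z => norm_nonneg _
  rw [Real.norm_of_nonneg hnn]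
  have hle : ∫ z, ‖k f x z‖ ≤ ∫ z, (Set.uIoc (0:ℝ) x).indicator (fun _ => C) z := by
    refine integral_mono (k_int_fixed f hf x).norm ?_ (k_norm_le f C hC x)
    exact (integrableOn_const measure_Ioc_lt_top.ne : IntegrableOn (fun _ => C) (Set.uIoc (0:ℝ) x) volume).integrable_indicator
      measurableSet_uIoc
  calc ∫ z, ‖k f x z‖ ≤ ∫ z, (Set.uIoc (0:ℝ) x).indicator (fun _ => C) z := hle
    _ = (volume (Set.uIoc (0:ℝ) x)).toReal • C := integral_indicator_const _ measurableSet_uIoc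
    _ = C * |x| := by
        rw [Set.uIoc, Real.volume_Ioc, ENNReal.toReal_ofReal (sub_nonneg.mpr min_le_max)]
        have h : max 0 x - min 0 x = |x| := by
          rw [max_sub_min_eq_abs]; simp [abs_sub_comm]
        rw [h, smul_eq_mul, mul_comm]

lemma inner_int (μ : Measure ℝ) [IsProbabilityMeasure μ] (f : ℝ → ℝ) (z : ℝ) :
    ∫ x, k f x z ∂μ = deriv f z * G μ z := by
  rcases lt_or_ge 0 z with hz | hz
  · have h1 : ∀ x, k f x z = (Set.Ici z).indicator (fun _ => deriv f z) x := by
      intro x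
      have h2 : z ∉ Set.Ioc x (0:ℝ) := by
        simp only [Set.mem_Ioc]; intro h; linarith [h.2]
      by_cases hx : z ≤ x
      · have : z ∈ Set.Ioc (0:ℝ) x := ⟨hz, hx⟩
        simp [k, Set.indicator_of_mem this, Set.indicator_of_notMem h2,
          Set.indicator_of_mem (Set.mem_Ici.mpr hx)]
      · have : z ∉ Set.Ioc (0:ℝ) x := by simp [Set.mem_Ioc, hx]
        simp [k, Set.indicator_of_notMem this, Set.indicator_of_notMem h2,
          Set.indicator_of_notMem (by simpa using hx : x ∉ Set.Ici z)]
    rw [integral_congr_ae (Filter.Eventually.of_forall h1),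
      integral_indicator_const _ measurableSet_Ici]
    simp [G, hz, smul_eq_mul, mul_comm, Measure.real]
  · have h1 : ∀ x, k f x z = -((Set.Iio z).indicator (fun _ => deriv f z) x) := by
      intro x
      have h2 : z ∉ Set.Ioc (0:ℝ) x := by
        simp only [Set.mem_Ioc]; intro h; linarith [h.1]
      by_cases hx : x < z
      · have : z ∈ Set.Ioc x (0:ℝ) := ⟨hx, hz⟩
        simp [k, Set.indicator_of_mem this, Set.indicator_of_notMem h2,
          Set.indicator_of_mem (Set.mem_Iio.mpr hx)]
      · have : z ∉ Set.Ioc x (0:ℝ) := by simp [Set.mem_Ioc]; intro h; exact absurd h hx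
        simp [k, Set.indicator_of_notMem this, Set.indicator_of_notMem h2,
          Set.indicator_of_notMem (by simpa using hx : x ∉ Set.Iio z)]
    rw [integral_congr_ae (Filter.Eventually.of_forall h1), integral_neg,
      integral_indicator_const _ measurableSet_Iio]
    simp only [G, if_neg (not_lt.mpr hz), smul_eq_mul, Measure.real]
    ring

/-- Main one-measure identity. -/
lemma keyA (μ : Measure ℝ) [IsProbabilityMeasure μ]
    (hm : Integrable (fun x => |x|) μ) (f : ℝ → ℝ) (hf : ContDiff ℝ 1 f)
    (C : ℝ) (hC : ∀ x, |deriv f x| ≤ C) :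
    Integrable (fun z => deriv f z * G μ z) volume ∧
      (∫ x, f x ∂μ) - f 0 = ∫ z, deriv f z * G μ z := by
  have hK := k_integrable μ hm f hf C hC
  have hswap : Integrable (fun z => ∫ x, k f x z ∂μ) volume := hK.integral_prod_right
  have hint : Integrable (fun z => deriv f z * G μ z) volume :=
    hswap.congr (Filter.Eventually.of_forall fun z => inner_int μ f z)
  refine ⟨hint, ?_⟩
  have hfint : Integrable f μ := by
    have hb : ∀ x, ‖f x‖ ≤ |f 0| + C * |x| := by
      intro x
      have hFTC : ∫ z in (0:ℝ)..x, deriv f z = f x - f 0 :=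
        intervalIntegral.integral_deriv_eq_sub
          (fun z _ => hf.differentiable one_ne_zero z)
          ((hf.continuous_deriv le_rfl).intervalIntegrable _ _)
      have hb2 : ‖∫ z in (0:ℝ)..x, deriv f z‖ ≤ C * |x - 0| :=
        intervalIntegral.norm_integral_le_of_norm_le_const
          (fun z _ => by simpa [Real.norm_eq_abs] using hC z)
      rw [hFTC] at hb2
      have : |f x - f 0| ≤ C * |x| := by simpa [Real.norm_eq_abs] using hb2
      calc ‖f x‖ = |f 0 + (f x - f 0)| := by rw [Real.norm_eq_abs]; ring_nf
        _ ≤ |f 0| + |f x - f 0| := abs_add_le _ _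
        _ ≤ |f 0| + C * |x| := by linarith
    exact Integrable.mono' ((integrable_const (|f 0|)).add (hm.const_mul C))
      hf.continuous.aestronglyMeasurable (Filter.Eventually.of_forall hb)
  calc (∫ x, f x ∂μ) - f 0 = ∫ x, (f x - f 0) ∂μ := by
        rw [integral_sub hfint (integrable_const _), integral_const]
        simp
    _ = ∫ x, ∫ z, k f x z ∂volume ∂μ :=
        integral_congr_ae (Filter.Eventually.of_forall fun x => sub_eq f hf x)
    _ = ∫ z, ∫ x, k f x z ∂μ ∂volume := integral_integral_swap hK
    _ = ∫ z, deriv f z * G μ z :=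
        integral_congr_ae (Filter.Eventually.of_forall (inner_int μ f))

lemma atoms_countable (μ : Measure ℝ) [IsProbabilityMeasure μ] :
    Set.Countable {z : ℝ | μ {z} ≠ 0} := by
  have h := Measure.countable_meas_level_set_pos (μ := μ) (g := id) measurable_id
  refine Set.Countable.mono ?_ h
  intro z hz
  simp only [Set.mem_setOf_eq] at hz ⊢
  have : {a : ℝ | id a = z} = {z} := by ext a; simp [eq_comm]
  rw [this]
  exact pos_iff_ne_zero.mpr hz

lemma ci (μ : Measure ℝ) [IsProbabilityMeasure μ] (z : ℝ) :
    (μ (Set.Ici z)).toReal = 1 - (μ (Set.Iio z)).toReal := by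
  have hcompl : Set.Ici z = (Set.Iio z)ᶜ := Set.compl_Iio.symm
  rw [hcompl, measure_compl measurableSet_Iio (measure_ne_top μ _), measure_univ,
    ENNReal.toReal_sub_of_le prob_le_one ENNReal.one_ne_top, ENNReal.toReal_one]

end CdfIBP

open CdfIBP in
/-- integration by parts against cumulative distribution functions: for
Borel probability measures `μ₁, μ₂` on `ℝ` with finite first moments and `f : ℝ → ℝ`
continuously differentiable with bounded derivative,
`∫ f dμ₁ − ∫ f dμ₂ = −∫ f'(z)·(F₁(z) − F₂(z)) dz`. -/
theorem integral_sub_eq_neg_integral_deriv_mul_cdf_diff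
    (μ₁ μ₂ : Measure ℝ) [IsProbabilityMeasure μ₁] [IsProbabilityMeasure μ₂]
    (hm₁ : Integrable (fun x => |x|) μ₁) (hm₂ : Integrable (fun x => |x|) μ₂)
    (f : ℝ → ℝ) (hf : ContDiff ℝ 1 f) (hf' : ∃ C, ∀ x, |deriv f x| ≤ C) :
    (∫ x, f x ∂μ₁) - (∫ x, f x ∂μ₂) =
      -∫ z, deriv f z * ((μ₁ (Set.Iic z)).toReal - (μ₂ (Set.Iic z)).toReal) := by
  obtain ⟨C, hC⟩ := hf'
  obtain ⟨hint1, heq1⟩ := keyA μ₁ hm₁ f hf C hC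
  obtain ⟨hint2, heq2⟩ := keyA μ₂ hm₂ f hf C hC
  have hnull : ∀ᵐ z ∂(volume : Measure ℝ), μ₁ {z} = 0 ∧ μ₂ {z} = 0 := by
    have hc : Set.Countable ({z : ℝ | μ₁ {z} ≠ 0} ∪ {z : ℝ | μ₂ {z} ≠ 0}) :=
      (atoms_countable μ₁).union (atoms_countable μ₂)
    have h0 : volume ({z : ℝ | μ₁ {z} ≠ 0} ∪ {z : ℝ | μ₂ {z} ≠ 0}) = 0 :=
      hc.measure_zero _
    rw [MeasureTheory.ae_iff]
    refine measure_mono_null ?_ h0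
    intro z hz
    simp only [Set.mem_setOf_eq, not_and_or] at hz
    simpa [Set.mem_union, Set.mem_setOf_eq] using hz
  have hae : ∀ᵐ z ∂(volume : Measure ℝ),
      deriv f z * G μ₁ z - deriv f z * G μ₂ z
        = -(deriv f z * ((μ₁ (Set.Iic z)).toReal - (μ₂ (Set.Iic z)).toReal)) := by
    filter_upwards [hnull] with z hz
    obtain ⟨h1, h2⟩ := hz
    have e₁ : μ₁ (Set.Iic z) = μ₁ (Set.Iio z) := by
      refine le_antisymm ?_ (measure_mono Set.Iio_subset_Iic_self)
      calc μ₁ (Set.Iic z) = μ₁ (Set.Iio z ∪ {z}) := by rw [Set.Iio_union_right]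
        _ ≤ μ₁ (Set.Iio z) + μ₁ {z} := measure_union_le _ _
        _ = μ₁ (Set.Iio z) := by rw [h1, add_zero]
    have e₂ : μ₂ (Set.Iic z) = μ₂ (Set.Iio z) := by
      refine le_antisymm ?_ (measure_mono Set.Iio_subset_Iic_self)
      calc μ₂ (Set.Iic z) = μ₂ (Set.Iio z ∪ {z}) := by rw [Set.Iio_union_right]
        _ ≤ μ₂ (Set.Iio z) + μ₂ {z} := measure_union_le _ _
        _ = μ₂ (Set.Iio z) := by rw [h2, add_zero]
    rcases lt_or_ge 0 z with hz0 | hz0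
    · rw [G, G, if_pos hz0, if_pos hz0, ci μ₁ z, ci μ₂ z, e₁, e₂]
      ring
    · rw [G, G, if_neg (not_lt.mpr hz0), if_neg (not_lt.mpr hz0), e₁, e₂]
      ring
  calc (∫ x, f x ∂μ₁) - (∫ x, f x ∂μ₂)
      = ((∫ x, f x ∂μ₁) - f 0) - ((∫ x, f x ∂μ₂) - f 0) := by ring
    _ = (∫ z, deriv f z * G μ₁ z) - (∫ z, deriv f z * G μ₂ z) := by rw [heq1, heq2]
    _ = ∫ z, (deriv f z * G μ₁ z - deriv f z * G μ₂ z) := (integral_sub hint1 hint2).symm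
    _ = ∫ z, -(deriv f z * ((μ₁ (Set.Iic z)).toReal - (μ₂ (Set.Iic z)).toReal)) :=
        integral_congr_ae hae
    _ = -∫ z, deriv f z * ((μ₁ (Set.Iic z)).toReal - (μ₂ (Set.Iic z)).toReal) :=
        integral_neg _
end

section
/- Let m ≥ 1 and let ψ₁, ψ₂ : ℝᵐ → ℝ be Lipschitz, nonnegative, compactly supported functions with ∫ ψ₁ dx = ∫ ψ₂ dx = 1 (Lebesgue measure). Suppose a, u : ℝᵐ → ℝ are bounded Lipschitz functions such that: a ≥ 0; u is 1-Lipschitz; ‖∇u(x)‖ = 1 for almost every x with a(x) > 0 (where ∇u is the almost-everywhere defined gradient of the Lipschitz function u); and for every Lipschitz function f : ℝᵐ → ℝ, ∫ f(x)·(ψ₁(x) − ψ₂(x)) dx = ∫ ⟨∇f(x), a(x)·∇u(x)⟩ dx (the weak formulation of −div(a∇u) = ψ₁ − ψ₂). Then sup{ ∫ f(x)·(ψ₁(x) − ψ₂(x)) dx : f : ℝᵐ → ℝ 1-Lipschitz } = ∫ a(x) dx. -/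
open MeasureTheory
open scoped RealInnerProductSpace

private lemma lipschitzWith_one_of_le {m : ℕ} (f : EuclideanSpace ℝ (Fin m) → ℝ)
    (h : ∀ x y, |f x - f y| ≤ ‖x - y‖) : LipschitzWith 1 f := by
  apply LipschitzWith.of_dist_le_mul
  intro x y
  rw [Real.dist_eq, dist_eq_norm, NNReal.coe_one, one_mul]
  exact h x y

private lemma norm_gradient_le_one {m : ℕ} (f : EuclideanSpace ℝ (Fin m) → ℝ)
    (h : LipschitzWith 1 f) (x : EuclideanSpace ℝ (Fin m)) : ‖gradient f x‖ ≤ 1 := by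
  have : ‖gradient f x‖ = ‖fderiv ℝ f x‖ := by
    unfold gradient; exact LinearIsometryEquiv.norm_map _ _
  rw [this]
  by_cases hd : DifferentiableAt ℝ f x
  · simpa using norm_fderiv_le_of_lipschitz ℝ h (x₀ := x)
  · simp [fderiv_zero_of_not_differentiableAt hd]

/-- if `−div(a ∇u) = ψ₁ − ψ₂` holds weakly, with `a ≥ 0` bounded Lipschitz,
`u` bounded `1`-Lipschitz and `‖∇u‖ = 1` a.e. on `{a > 0}`, then the Kantorovich dual
supremum between the probability densities `ψ₁` and `ψ₂` equals `∫ a(x) dx`. -/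
theorem wasserstein_eq_integral_a
    (m : ℕ) (hm : 1 ≤ m)
    (ψ₁ ψ₂ : EuclideanSpace ℝ (Fin m) → ℝ)
    (hψ₁_lip : ∃ K, LipschitzWith K ψ₁) (hψ₂_lip : ∃ K, LipschitzWith K ψ₂)
    (hψ₁_nonneg : ∀ x, 0 ≤ ψ₁ x) (hψ₂_nonneg : ∀ x, 0 ≤ ψ₂ x)
    (hψ₁_supp : HasCompactSupport ψ₁) (hψ₂_supp : HasCompactSupport ψ₂)
    (hψ₁_prob : ∫ x, ψ₁ x = 1) (hψ₂_prob : ∫ x, ψ₂ x = 1)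
    (a u : EuclideanSpace ℝ (Fin m) → ℝ)
    (ha_bdd : ∃ C, ∀ x, |a x| ≤ C) (ha_lip : ∃ K, LipschitzWith K a)
    (ha_nonneg : ∀ x, 0 ≤ a x)
    (hu_bdd : ∃ C, ∀ x, |u x| ≤ C)
    (hu_lip : ∀ x y, |u x - u y| ≤ ‖x - y‖)
    (hu_grad : ∀ᵐ x, 0 < a x → ‖gradient u x‖ = 1)
    (hweak : ∀ f : EuclideanSpace ℝ (Fin m) → ℝ, (∃ K, LipschitzWith K f) →
      ∫ x, f x * (ψ₁ x - ψ₂ x) = ∫ x, ⟪gradient f x, a x • gradient u x⟫) :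
    (⨆ f : {f : EuclideanSpace ℝ (Fin m) → ℝ // ∀ x y, |f x - f y| ≤ ‖x - y‖},
      ENNReal.ofReal (∫ x, f.1 x * (ψ₁ x - ψ₂ x))) =
      ENNReal.ofReal (∫ x, a x) := by
  have hu1 : LipschitzWith 1 u := lipschitzWith_one_of_le u hu_lip
  -- continuity facts
  have hψ_cont : Continuous fun x => ψ₁ x - ψ₂ x :=
    (hψ₁_lip.choose_spec.continuous).sub (hψ₂_lip.choose_spec.continuous)
  have hψ_supp : HasCompactSupport fun x => ψ₁ x - ψ₂ x := by simpa [sub_eq_add_neg, Pi.add_def, Pi.neg_def] using hψ₁_supp.add hψ₂_supp.neg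
  -- integrability of g * (ψ₁ - ψ₂) for continuous g
  have hInt : ∀ g : EuclideanSpace ℝ (Fin m) → ℝ, Continuous g →
      Integrable (fun x => g x * (ψ₁ x - ψ₂ x)) := by
    intro g hg
    exact (hg.mul hψ_cont).integrable_of_hasCompactSupport (hψ_supp.mul_left)
  -- the integral at u equals ∫ a
  have hu_eq : ∫ x, u x * (ψ₁ x - ψ₂ x) = ∫ x, a x := by
    rw [hweak u ⟨1, hu1⟩]
    apply integral_congr_ae
    filter_upwards [hu_grad] with x hx
    rcases eq_or_lt_of_le (ha_nonneg x) with h0 | h0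
    · simp [← h0]
    · rw [real_inner_smul_right, real_inner_self_eq_norm_sq, hx h0]
      ring
  -- key bound: any 1-Lipschitz f has smaller integral than u
  have key : ∀ f : EuclideanSpace ℝ (Fin m) → ℝ, (∀ x y, |f x - f y| ≤ ‖x - y‖) →
      ∫ x, f x * (ψ₁ x - ψ₂ x) ≤ ∫ x, u x * (ψ₁ x - ψ₂ x) := by
    intro f hf
    have hf1 : LipschitzWith 1 f := lipschitzWith_one_of_le f hf
    have hdiff_lip : LipschitzWith 2 (fun x => u x - f x) := by
      have := hu1.sub hf1
      norm_num at this
      exact this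
    have h1 := hweak (fun x => u x - f x) ⟨2, hdiff_lip⟩
    have hpos : 0 ≤ ∫ x, ⟪gradient (fun x => u x - f x) x, a x • gradient u x⟫ := by
      apply integral_nonneg_of_ae
      filter_upwards [hu_grad, hu1.ae_differentiableAt (μ := volume),
        hf1.ae_differentiableAt (μ := volume)] with x hx hdu hdf
      simp only [Pi.zero_apply]
      rcases eq_or_lt_of_le (ha_nonneg x) with h0 | h0
      · simp [← h0]
      · have hgsub : gradient (fun x => u x - f x) x = gradient u x - gradient f x := by
          unfold gradient
          rw [fderiv_fun_sub hdu hdf, map_sub]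
        rw [hgsub, real_inner_smul_right, inner_sub_left, real_inner_self_eq_norm_sq, hx h0]
        have hle : ⟪gradient f x, gradient u x⟫ ≤ 1 := by
          calc ⟪gradient f x, gradient u x⟫ ≤ ‖gradient f x‖ * ‖gradient u x‖ :=
                real_inner_le_norm _ _
            _ ≤ 1 * 1 := by
                apply mul_le_mul (norm_gradient_le_one f hf1 x) (le_of_eq (hx h0))
                  (norm_nonneg _) zero_le_one
            _ = 1 := by ring
        nlinarith
    have h2 : ∫ x, (u x - f x) * (ψ₁ x - ψ₂ x)
        = (∫ x, u x * (ψ₁ x - ψ₂ x)) - ∫ x, f x * (ψ₁ x - ψ₂ x) := by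
      simp_rw [sub_mul]
      exact integral_sub (hInt u hu1.continuous) (hInt f hf1.continuous)
    linarith [h1 ▸ hpos, h2 ▸ (h1 ▸ hpos)]
  -- conclude
  rw [← hu_eq]
  apply le_antisymm
  · exact iSup_le fun f => ENNReal.ofReal_le_ofReal (key f.1 f.2)
  · exact le_iSup (fun f : {f : EuclideanSpace ℝ (Fin m) → ℝ // ∀ x y, |f x - f y| ≤ ‖x - y‖} =>
      ENNReal.ofReal (∫ x, f.1 x * (ψ₁ x - ψ₂ x))) ⟨u, hu_lip⟩
end
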